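/- If t ≥ 2 and some n_j ≥ 2, then Γ(Mat(n,m,F_q)) is not 2-partially distance-regular: there exist vertices v, v' at distance 2 from the zero tuple O with c_2(v,O) = 2 but c_2(v',O) ≥ 3, where c_2(x,O) is the number of common neighbors of x and O. -/

import Mathlib

private lemma rank_neg' {F : Type*} [Field F] {a b : ℕ} (A : Matrix (Fin a) (Fin b) F) :
    (-A).rank = A.rank := by
  have h : LinearMap.range (-A).mulVecLin = LinearMap.range A.mulVecLin := by
    ext x
    simp only [LinearMap.mem_range, Matrix.mulVecLin_apply, Matrix.neg_mulVec]
    constructor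
    · rintro ⟨v, hv⟩; exact ⟨-v, by simp [Matrix.mulVec_neg, hv]⟩
    · rintro ⟨v, hv⟩; exact ⟨-v, by simp [Matrix.mulVec_neg, hv]⟩
  rw [Matrix.rank, Matrix.rank, h]

/-- The sum-rank of a tuple of matrices. -/
noncomputable def srk {F : Type*} [Field F] {t : ℕ} {n m : Fin t → ℕ}
    (X : ∀ i, Matrix (Fin (n i)) (Fin (m i)) F) : ℕ :=
  ∑ i, (X i).rank

/-- The sum-rank-metric graph. -/
def srGraph (F : Type*) [Field F] {t : ℕ} (n m : Fin t → ℕ) :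
    SimpleGraph (∀ i : Fin t, Matrix (Fin (n i)) (Fin (m i)) F) where
  Adj X Y := srk (fun i => X i - Y i) = 1
  symm := by
    constructor
    intro X Y h
    unfold srk at h ⊢
    calc ∑ i, (Y i - X i).rank
        = ∑ i, (X i - Y i).rank := by
          refine Finset.sum_congr rfl fun i _ => ?_
          rw [show Y i - X i = -(X i - Y i) by abel, rank_neg']
      _ = 1 := h
  loopless := by
    constructor
    intro X h
    unfold srk at h
    simp at h

section helpers
variable {F : Type*} [Field F]

private lemma eq_zero_of_rank_eq_zero' {a b : ℕ} {A : Matrix (Fin a) (Fin b) F}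
    (h : A.rank = 0) : A = 0 := by
  rw [Matrix.rank, Submodule.finrank_eq_zero, LinearMap.range_eq_bot] at h
  ext i k
  have := congrFun (LinearMap.congr_fun h (Pi.single k 1)) i
  simpa using this

private lemma rank_ne_zero' {a b : ℕ} {A : Matrix (Fin a) (Fin b) F}
    (h : A ≠ 0) : A.rank ≠ 0 :=
  fun h0 => h (eq_zero_of_rank_eq_zero' h0)

private lemma rank_vecMulVec' {a b : ℕ} {u : Fin a → F} {v : Fin b → F}
    (hu : u ≠ 0) (hv : v ≠ 0) : (Matrix.vecMulVec u v).rank = 1 := by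
  have hle : (Matrix.vecMulVec u v).rank ≤ 1 := by
    rw [Matrix.vecMulVec_eq Unit u v]
    calc (Matrix.replicateCol Unit u * Matrix.replicateRow Unit v).rank
        ≤ (Matrix.replicateCol Unit u).rank := Matrix.rank_mul_le_left _ _
      _ ≤ Fintype.card Unit := Matrix.rank_le_card_width _
      _ = 1 := by simp
  have hne : (Matrix.vecMulVec u v).rank ≠ 0 := by
    apply rank_ne_zero'
    obtain ⟨i, hi⟩ := Function.ne_iff.mp hu
    obtain ⟨k, hk⟩ := Function.ne_iff.mp hv
    intro h0
    have := congrFun (congrFun h0 i) k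
    simp only [Matrix.vecMulVec_apply, Matrix.zero_apply] at this
    exact (mul_ne_zero (by simpa using hi) (by simpa using hk)) this
  omega

private lemma rank_stdBasisMatrix' {a b : ℕ} (i : Fin a) (k : Fin b) :
    (Matrix.single i k (1 : F)).rank = 1 := by
  rw [Matrix.single_eq_single_vecMulVec_single]
  exact rank_vecMulVec' (by simp [Function.ne_iff])
    (by simp [Function.ne_iff])

private lemma two_le_rank_add_stdBasis {a b : ℕ} {i0 i1 : Fin a} {k0 k1 : Fin b}
    (hi : i0 ≠ i1) (hk : k0 ≠ k1) :
    2 ≤ (Matrix.single i0 k0 (1:F) + Matrix.single i1 k1 (1:F)).rank := by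
  set M := Matrix.single i0 k0 (1:F) + Matrix.single i1 k1 (1:F) with hM
  have hc0 : M.mulVec (Pi.single k0 1) = Pi.single i0 1 := by
    ext r
    simp [hM, Matrix.add_mulVec, Matrix.single, Pi.single_apply, hk.symm, eq_comm]
  have hc1 : M.mulVec (Pi.single k1 1) = Pi.single i1 1 := by
    ext r
    simp [hM, Matrix.add_mulVec, Matrix.single, Pi.single_apply, hk, eq_comm]
  have h0 : Pi.single i0 (1:F) ∈ LinearMap.range M.mulVecLin :=
    ⟨(Pi.single k0 1 : Fin b → F), by rw [Matrix.mulVecLin_apply, hc0]⟩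
  have h1 : Pi.single i1 (1:F) ∈ LinearMap.range M.mulVecLin :=
    ⟨(Pi.single k1 1 : Fin b → F), by rw [Matrix.mulVecLin_apply, hc1]⟩
  have hli : LinearIndependent F ![(Pi.single i0 1 : Fin a → F), Pi.single i1 1] := by
    rw [LinearIndependent.pair_iff]
    intro s u hsu
    constructor
    · have := congrFun hsu i0
      simpa [Pi.single_apply, hi.symm] using this
    · have := congrFun hsu i1
      simpa [Pi.single_apply, hi] using this
  have hspan : Submodule.span F (Set.range ![(Pi.single i0 1 : Fin a → F), Pi.single i1 1]) ≤
      LinearMap.range M.mulVecLin := by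
    rw [Submodule.span_le]
    rintro x ⟨i, rfl⟩
    fin_cases i
    · exact h0
    · exact h1
  have hmono := Submodule.finrank_mono hspan
  rw [finrank_span_eq_card hli] at hmono
  simpa [Matrix.rank] using hmono

private lemma sum_eq_one_nat {t : ℕ} {f : Fin t → ℕ} (h : ∑ i, f i = 1) :
    ∃ i, f i = 1 ∧ ∀ k, k ≠ i → f k = 0 := by
  have hex : ∃ i, f i ≠ 0 := by
    by_contra hall
    push_neg at hall
    simp [hall] at h
  obtain ⟨i, hi⟩ := hex
  have hle : f i ≤ 1 := h ▸ Finset.single_le_sum (fun k _ => Nat.zero_le _) (Finset.mem_univ i)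
  refine ⟨i, by omega, fun k hk => ?_⟩
  have hpair : f i + f k ≤ ∑ x, f x := by
    rw [← Finset.sum_pair (Ne.symm hk)]
    exact Finset.sum_le_sum_of_subset (Finset.subset_univ _)
  omega

private lemma pair_le_sum_nat {t : ℕ} (f : Fin t → ℕ) {j k : Fin t} (hjk : j ≠ k) :
    f j + f k ≤ ∑ i, f i := by
  rw [← Finset.sum_pair hjk]
  exact Finset.sum_le_sum_of_subset (Finset.subset_univ _)

private lemma hdiff_helper {a b : ℕ} {i0 i1 : Fin a} {k0 k1 : Fin b}
    (hi : i0 ≠ i1) (hk : k0 ≠ k1) :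
    Matrix.single i0 k0 (1:F) + Matrix.single i1 k1 1 -
      Matrix.vecMulVec (Pi.single i0 1 + Pi.single i1 1) (Pi.single k0 1) =
    Matrix.vecMulVec (Pi.single i1 1) (Pi.single k1 1 - Pi.single k0 1) := by
  ext r c
  simp only [Matrix.sub_apply, Matrix.add_apply, Matrix.vecMulVec_apply,
    Matrix.single, Matrix.of_apply, Pi.add_apply, Pi.sub_apply, Pi.single_apply]
  by_cases hr0 : r = i0 <;> by_cases hr1 : r = i1 <;>
    by_cases hc0 : c = k0 <;> by_cases hc1 : c = k1 <;>
    simp_all [eq_comm, Ne.symm]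

end helpers

section srkLemmas
variable {F : Type*} [Field F] {t : ℕ} {n m : Fin t → ℕ}

private lemma srk_single_eq {j : Fin t} {X : ∀ i, Matrix (Fin (n i)) (Fin (m i)) F}
    (hX : ∀ i, i ≠ j → X i = 0) : srk X = (X j).rank := by
  unfold srk
  exact Finset.sum_eq_single j (fun i _ hi => by rw [hX i hi, Matrix.rank_zero])
    (fun h => absurd (Finset.mem_univ j) h)

private lemma srk_pair_eq {j k : Fin t} (hjk : j ≠ k) {X : ∀ i, Matrix (Fin (n i)) (Fin (m i)) F}
    (hX : ∀ i, i ≠ j → i ≠ k → X i = 0) : srk X = (X j).rank + (X k).rank := by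
  unfold srk
  have hps : ∑ i ∈ ({j, k} : Finset (Fin t)), (X i).rank = (X j).rank + (X k).rank :=
    Finset.sum_pair hjk
  rw [← hps]
  refine (Finset.sum_subset (Finset.subset_univ _) fun x _ hx => ?_).symm
  simp only [Finset.mem_insert, Finset.mem_singleton, not_or] at hx
  rw [hX x hx.1 hx.2, Matrix.rank_zero]

private lemma srGraph_adj (X Y : ∀ i, Matrix (Fin (n i)) (Fin (m i)) F) :
    (srGraph F n m).Adj X Y ↔ srk (fun i => X i - Y i) = 1 := Iff.rfl

end srkLemmas

/-- If $t \ge 2$ and some $n_j \ge 2$, the sum-rank-metric graph is not 2-partially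
distance-regular: there are vertices $v, v'$ at distance 2 from the zero tuple with
$c_2(v, O) = 2$ but $c_2(v', O) \ge 3$. -/
theorem srGraph_not_two_partially_distanceRegular (F : Type*) [Field F] [Fintype F]
    (t : ℕ) (ht : 2 ≤ t) (n m : Fin t → ℕ) (hn : ∀ i, 0 < n i) (hm : ∀ i, 0 < m i)
    (j : Fin t) (hnj : 2 ≤ n j) (hmj : 2 ≤ m j) :
    ∃ v v' : ∀ i : Fin t, Matrix (Fin (n i)) (Fin (m i)) F,
      (srGraph F n m).dist 0 v = 2 ∧
      (srGraph F n m).dist 0 v' = 2 ∧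
      Nat.card {w // (srGraph F n m).Adj v w ∧ (srGraph F n m).Adj 0 w} = 2 ∧
      3 ≤ Nat.card {w // (srGraph F n m).Adj v' w ∧ (srGraph F n m).Adj 0 w} := by
  classical
  have hnt : Nontrivial (Fin t) := Fin.nontrivial_iff_two_le.mpr ht
  obtain ⟨k, hkj⟩ := exists_ne j
  have hjk : j ≠ k := hkj.symm
  set i0 : Fin (n j) := ⟨0, by omega⟩ with hi0def
  set i1 : Fin (n j) := ⟨1, by omega⟩ with hi1def
  set k0 : Fin (m j) := ⟨0, by omega⟩ with hk0def
  set k1 : Fin (m j) := ⟨1, by omega⟩ with hk1def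
  have hi01 : i0 ≠ i1 := by simp [hi0def, hi1def, Fin.ext_iff]
  have hk01 : k0 ≠ k1 := by simp [hk0def, hk1def, Fin.ext_iff]
  set A : Matrix (Fin (n j)) (Fin (m j)) F := Matrix.single i0 k0 1 with hAdef
  set A' : Matrix (Fin (n j)) (Fin (m j)) F := Matrix.single i1 k1 1 with hA'def
  set B : Matrix (Fin (n k)) (Fin (m k)) F :=
    Matrix.single ⟨0, hn k⟩ ⟨0, hm k⟩ 1 with hBdef
  set C : Matrix (Fin (n j)) (Fin (m j)) F :=
    Matrix.vecMulVec (Pi.single i0 1 + Pi.single i1 1) (Pi.single k0 1) with hCdef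
  have hArank : A.rank = 1 := rank_stdBasisMatrix' _ _
  have hA'rank : A'.rank = 1 := rank_stdBasisMatrix' _ _
  have hBrank : B.rank = 1 := rank_stdBasisMatrix' _ _
  have hCrank : C.rank = 1 := by
    refine rank_vecMulVec' ?_ ?_
    · intro h
      have := congrFun h i0
      simp [Pi.single_apply, hi01.symm] at this
    · intro h
      have := congrFun h k0
      simp [Pi.single_apply] at this
  have hMrank : 2 ≤ (A + A').rank := two_le_rank_add_stdBasis hi01 hk01
  have hAne : A ≠ 0 := by
    intro h
    have := congrFun (congrFun h i0) k0
    simp [hAdef, Matrix.single] at this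
  set v : ∀ i, Matrix (Fin (n i)) (Fin (m i)) F := Pi.single j A + Pi.single k B with hvdef
  set v' : ∀ i, Matrix (Fin (n i)) (Fin (m i)) F := Pi.single j (A + A') with hv'def
  have hvj : v j = A := by simp [hvdef, Pi.single_eq_of_ne hjk]
  have hvk : v k = B := by simp [hvdef, Pi.single_eq_of_ne hkj]
  have hvo : ∀ i, i ≠ j → i ≠ k → v i = 0 := by
    intro i h1 h2
    simp [hvdef, Pi.single_eq_of_ne h1, Pi.single_eq_of_ne h2]
  -- adjacency facts
  have adjA : (srGraph F n m).Adj 0 (Pi.single j A) := by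
    rw [srGraph_adj, srk_single_eq (j := j) (fun i hi => by simp [Pi.single_eq_of_ne hi])]
    simp only [Pi.zero_apply, zero_sub, Pi.single_eq_same]
    rw [rank_neg', hArank]
  have adjAv : (srGraph F n m).Adj (Pi.single j A) v := by
    rw [srGraph_adj, srk_single_eq (j := k) (fun i hi => ?_)]
    · simp only [hvdef, Pi.add_apply, Pi.single_eq_same, Pi.single_eq_of_ne hkj]
      rw [show (0 : Matrix (Fin (n k)) (Fin (m k)) F) - (0 + B) = -B by abel, rank_neg', hBrank]
    · by_cases hij : i = j
      · subst hij
        simp [hvdef, Pi.single_eq_of_ne hi]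
      · simp [hvdef, Pi.single_eq_of_ne hij, Pi.single_eq_of_ne hi]
  have nadjv : ¬ (srGraph F n m).Adj 0 v := by
    rw [srGraph_adj, srk_pair_eq hjk (fun i h1 h2 => by rw [Pi.zero_apply, hvo i h1 h2, sub_zero])]
    simp only [Pi.zero_apply, zero_sub, hvj, hvk]
    rw [rank_neg', rank_neg', hArank, hBrank]
    omega
  have adjAv' : (srGraph F n m).Adj (Pi.single j A) v' := by
    rw [srGraph_adj, srk_single_eq (j := j) (fun i hi => by
      simp [hv'def, Pi.single_eq_of_ne hi])]
    simp only [hv'def, Pi.single_eq_same]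
    rw [show A - (A + A') = -A' by abel, rank_neg', hA'rank]
  have nadjv' : ¬ (srGraph F n m).Adj 0 v' := by
    rw [srGraph_adj, srk_single_eq (j := j) (fun i hi => by
      simp [hv'def, Pi.single_eq_of_ne hi])]
    simp only [hv'def, Pi.zero_apply, zero_sub, Pi.single_eq_same]
    rw [rank_neg']
    omega
  have hvne : (0 : ∀ i, Matrix (Fin (n i)) (Fin (m i)) F) ≠ v := by
    intro h
    have h2 := (congrFun h j).symm
    rw [hvj] at h2
    exact hAne h2
  have hv'ne : (0 : ∀ i, Matrix (Fin (n i)) (Fin (m i)) F) ≠ v' := by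
    intro h
    have h2 : A + A' = 0 := by
      have h3 := congrFun h j
      simpa [hv'def] using h3.symm
    rw [h2, Matrix.rank_zero] at hMrank
    omega
  -- distances
  have hd1 : (srGraph F n m).dist 0 v = 2 := by
    have hw : (srGraph F n m).Walk 0 v := .cons adjA (.cons adjAv .nil)
    have hle : (srGraph F n m).dist 0 v ≤ 2 := by
      simpa using SimpleGraph.dist_le
        (SimpleGraph.Walk.cons adjA (SimpleGraph.Walk.cons adjAv SimpleGraph.Walk.nil))
    have h0 : (srGraph F n m).dist 0 v ≠ 0 := by
      intro h
      rcases SimpleGraph.dist_eq_zero_iff_eq_or_not_reachable.mp h with h' | h'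
      · exact hvne h'
      · exact h' ⟨hw⟩
    have h1 : (srGraph F n m).dist 0 v ≠ 1 := by
      intro h
      exact nadjv (SimpleGraph.dist_eq_one_iff_adj.mp h)
    omega
  have hd2 : (srGraph F n m).dist 0 v' = 2 := by
    have hw : (srGraph F n m).Walk 0 v' := .cons adjA (.cons adjAv' .nil)
    have hle : (srGraph F n m).dist 0 v' ≤ 2 := by
      simpa using SimpleGraph.dist_le
        (SimpleGraph.Walk.cons adjA (SimpleGraph.Walk.cons adjAv' SimpleGraph.Walk.nil))
    have h0 : (srGraph F n m).dist 0 v' ≠ 0 := by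
      intro h
      rcases SimpleGraph.dist_eq_zero_iff_eq_or_not_reachable.mp h with h' | h'
      · exact hv'ne h'
      · exact h' ⟨hw⟩
    have h1 : (srGraph F n m).dist 0 v' ≠ 1 := by
      intro h
      exact nadjv' (SimpleGraph.dist_eq_one_iff_adj.mp h)
    omega
  refine ⟨v, v', hd1, hd2, ?_, ?_⟩
  -- exactly two common neighbours of v and 0
  · have hset : {w | (srGraph F n m).Adj v w ∧ (srGraph F n m).Adj 0 w} =
        {Pi.single j A, Pi.single k B} := by
      ext w
      simp only [Set.mem_setOf_eq, Set.mem_insert_iff, Set.mem_singleton_iff]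
      constructor
      · rintro ⟨hw1, hw2⟩
        rw [srGraph_adj] at hw1 hw2
        have hw2' : ∑ i, (w i).rank = 1 := by
          rw [← hw2]
          unfold srk
          exact (Finset.sum_congr rfl fun i _ => by
            simp only [Pi.zero_apply, zero_sub]; rw [rank_neg']).symm
        obtain ⟨i', hi'1, hi'0⟩ := sum_eq_one_nat hw2'
        have hwzero : ∀ i2, i2 ≠ i' → w i2 = 0 :=
          fun i2 h2 => eq_zero_of_rank_eq_zero' (hi'0 i2 h2)
        by_cases hij : i' = j
        · subst hij
          left
          have heq : srk (fun i => v i - w i) = (v i' - w i').rank + (v k - w k).rank := by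
            refine srk_pair_eq hjk fun i h1 h2 => ?_
            rw [hvo i h1 h2, hwzero i h1, sub_zero]
          rw [heq, hvj, hvk, hwzero k hkj, sub_zero, hBrank] at hw1
          have hr0 : (A - w i').rank = 0 := by omega
          have hwA : w i' = A := (sub_eq_zero.mp (eq_zero_of_rank_eq_zero' hr0)).symm
          funext i
          by_cases hij2 : i = i'
          · subst hij2
            rw [hwA, Pi.single_eq_same]
          · rw [hwzero i hij2, Pi.single_eq_of_ne hij2]
        · by_cases hik : i' = k
          · subst hik
            right
            have heq : srk (fun i => v i - w i) = (v j - w j).rank + (v i' - w i').rank := by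
              refine srk_pair_eq hjk fun i h1 h2 => ?_
              rw [hvo i h1 h2, hwzero i h2, sub_zero]
            rw [heq, hvj, hvk, hwzero j (Ne.symm hij), sub_zero, hArank] at hw1
            have hr0 : (B - w i').rank = 0 := by omega
            have hwB : w i' = B := (sub_eq_zero.mp (eq_zero_of_rank_eq_zero' hr0)).symm
            funext i
            by_cases hik2 : i = i'
            · subst hik2
              rw [hwB, Pi.single_eq_same]
            · rw [hwzero i hik2, Pi.single_eq_of_ne hik2]
          · exfalso
            have hp := pair_le_sum_nat (fun i => (v i - w i).rank) hjk
            unfold srk at hw1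
            rw [hw1] at hp
            rw [hvj, hvk, hwzero j (Ne.symm hij),
              hwzero k (Ne.symm hik), sub_zero, sub_zero,
              hArank, hBrank] at hp
            omega
      · rintro (rfl | rfl)
        · refine ⟨?_, adjA⟩
          rw [srGraph_adj, srk_single_eq (j := k) (fun i hi => ?_)]
          · simp only [hvdef, Pi.add_apply, Pi.single_eq_same, Pi.single_eq_of_ne hkj]
            rw [show (0 : Matrix (Fin (n k)) (Fin (m k)) F) + B - 0 = B by abel, hBrank]
          · by_cases hij2 : i = j
            · subst hij2
              simp [hvdef, Pi.single_eq_of_ne hi]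
            · simp [hvdef, Pi.single_eq_of_ne hij2, Pi.single_eq_of_ne hi]
        · constructor
          · rw [srGraph_adj, srk_single_eq (j := j) (fun i hi => ?_)]
            · simp only [hvdef, Pi.add_apply, Pi.single_eq_same, Pi.single_eq_of_ne hjk]
              rw [show A + 0 - (0 : Matrix (Fin (n j)) (Fin (m j)) F) = A by abel, hArank]
            · by_cases hik2 : i = k
              · subst hik2
                simp [hvdef, Pi.single_eq_of_ne hi]
              · simp [hvdef, Pi.single_eq_of_ne hik2, Pi.single_eq_of_ne hi]
          · rw [srGraph_adj, srk_single_eq (j := k) (fun i hi => by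
              simp [Pi.single_eq_of_ne hi])]
            simp only [Pi.zero_apply, zero_sub, Pi.single_eq_same]
            rw [rank_neg', hBrank]
    have hab : (Pi.single j A : ∀ i, Matrix (Fin (n i)) (Fin (m i)) F) ≠ Pi.single k B := by
      intro h
      have := congrFun h j
      rw [Pi.single_eq_same, Pi.single_eq_of_ne hjk] at this
      exact hAne this
    calc Nat.card {w // (srGraph F n m).Adj v w ∧ (srGraph F n m).Adj 0 w}
        = Nat.card ({Pi.single j A, Pi.single k B} :
            Set (∀ i, Matrix (Fin (n i)) (Fin (m i)) F)) :=
          Nat.card_congr (Equiv.setCongr hset)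
      _ = ({Pi.single j A, Pi.single k B} :
            Set (∀ i, Matrix (Fin (n i)) (Fin (m i)) F)).ncard :=
          Nat.card_coe_set_eq _
      _ = 2 := Set.ncard_pair hab
  -- at least three common neighbours of v' and 0
  · have memA : (srGraph F n m).Adj v' (Pi.single j A) ∧ (srGraph F n m).Adj 0 (Pi.single j A) := by
      refine ⟨?_, adjA⟩
      rw [srGraph_adj, srk_single_eq (j := j) (fun i hi => by
        simp [hv'def, Pi.single_eq_of_ne hi])]
      simp only [hv'def, Pi.single_eq_same]
      rw [add_sub_cancel_left, hA'rank]
    have memA' : (srGraph F n m).Adj v' (Pi.single j A') ∧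
        (srGraph F n m).Adj 0 (Pi.single j A') := by
      constructor
      · rw [srGraph_adj, srk_single_eq (j := j) (fun i hi => by
          simp [hv'def, Pi.single_eq_of_ne hi])]
        simp only [hv'def, Pi.single_eq_same]
        rw [add_sub_cancel_right, hArank]
      · rw [srGraph_adj, srk_single_eq (j := j) (fun i hi => by
          simp [Pi.single_eq_of_ne hi])]
        simp only [Pi.zero_apply, zero_sub, Pi.single_eq_same]
        rw [rank_neg', hA'rank]
    have hdiff : A + A' - C =
        Matrix.vecMulVec (Pi.single i1 1) (Pi.single k1 1 - Pi.single k0 1) :=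
      hdiff_helper hi01 hk01
    have memC : (srGraph F n m).Adj v' (Pi.single j C) ∧
        (srGraph F n m).Adj 0 (Pi.single j C) := by
      constructor
      · rw [srGraph_adj, srk_single_eq (j := j) (fun i hi => by
          simp [hv'def, Pi.single_eq_of_ne hi])]
        simp only [hv'def, Pi.single_eq_same]
        rw [hdiff]
        refine rank_vecMulVec' ?_ ?_
        · intro h
          have := congrFun h i1
          simp [Pi.single_apply] at this
        · intro h
          have := congrFun h k1
          simp [Pi.single_apply, hk01.symm] at this
      · rw [srGraph_adj, srk_single_eq (j := j) (fun i hi => by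
          simp [Pi.single_eq_of_ne hi])]
        simp only [Pi.zero_apply, zero_sub, Pi.single_eq_same]
        rw [rank_neg', hCrank]
    -- three distinct elements
    have hAA' : (Pi.single j A : ∀ i, Matrix (Fin (n i)) (Fin (m i)) F) ≠ Pi.single j A' := by
      intro h
      have := congrFun (congrFun (congrFun h j) i0) k0
      rw [Pi.single_eq_same, Pi.single_eq_same] at this
      simp [hAdef, hA'def, Matrix.single, hi01.symm] at this
    have hAC : (Pi.single j A : ∀ i, Matrix (Fin (n i)) (Fin (m i)) F) ≠ Pi.single j C := by
      intro h
      have := congrFun (congrFun (congrFun h j) i1) k0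
      rw [Pi.single_eq_same, Pi.single_eq_same] at this
      simp [hAdef, hCdef, Matrix.single, Matrix.vecMulVec_apply,
        Pi.single_apply, hi01, hi01.symm] at this
    have hA'C : (Pi.single j A' : ∀ i, Matrix (Fin (n i)) (Fin (m i)) F) ≠ Pi.single j C := by
      intro h
      have := congrFun (congrFun (congrFun h j) i0) k0
      rw [Pi.single_eq_same, Pi.single_eq_same] at this
      simp [hA'def, hCdef, Matrix.single, Matrix.vecMulVec_apply,
        Pi.single_apply, hi01, hi01.symm, hk01.symm] at this
    have hsub : ({Pi.single j A, Pi.single j A', Pi.single j C} :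
        Set (∀ i, Matrix (Fin (n i)) (Fin (m i)) F)) ⊆
        {w | (srGraph F n m).Adj v' w ∧ (srGraph F n m).Adj 0 w} := by
      rintro w (rfl | rfl | rfl)
      · exact memA
      · exact memA'
      · exact memC
    have h3 : ({Pi.single j A, Pi.single j A', Pi.single j C} :
        Set (∀ i, Matrix (Fin (n i)) (Fin (m i)) F)).ncard = 3 := by
      rw [Set.ncard_insert_of_notMem (by simp [hAA', hAC]) (Set.toFinite _),
        Set.ncard_pair hA'C]
    calc (3 : ℕ) = ({Pi.single j A, Pi.single j A', Pi.single j C} :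
            Set (∀ i, Matrix (Fin (n i)) (Fin (m i)) F)).ncard := h3.symm
      _ ≤ {w | (srGraph F n m).Adj v' w ∧ (srGraph F n m).Adj 0 w}.ncard :=
          Set.ncard_le_ncard hsub (Set.toFinite _)
      _ = Nat.card {w // (srGraph F n m).Adj v' w ∧ (srGraph F n m).Adj 0 w} :=
          (Nat.card_coe_set_eq _).symm
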